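/- Let {X_i : i ∈ I} be a family of topological spaces such that for every countable subset I' ⊆ I the product ∏_{i∈I'} X_i is Fréchet–Urysohn. Then the full product X = ∏_{i∈I} X_i is κ-Fréchet–Urysohn. -/

import Mathlib

open Filter Topology

set_option synthInstance.maxHeartbeats 1000000
set_option maxHeartbeats 1000000

/-- A topological space is κ-Fréchet–Urysohn if for every open set `U` and every point
`x` in the closure of `U` there is a sequence in `U` converging to `x`. -/
def KappaFrechetUrysohn (X : Type*) [TopologicalSpace X] : Prop :=
  ∀ U : Set X, IsOpen U → ∀ x ∈ closure U,
    ∃ u : ℕ → X, (∀ n, u n ∈ U) ∧ Tendsto u atTop (𝓝 x)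

/-- The set of points with countable "support" relative to `x` is dense. -/
lemma sigma_dense {I : Type*} {X : I → Type*} [∀ i, TopologicalSpace (X i)]
    (x : ∀ i, X i) : Dense {a : ∀ i, X i | {i | a i ≠ x i}.Countable} := by
  classical
  rw [dense_iff_inter_open]
  intro V hV ⟨y, hy⟩
  obtain ⟨F, u, hu, hbox⟩ := isOpen_pi_iff.mp hV y hy
  refine ⟨fun i => if i ∈ F then y i else x i, hbox fun i hi => ?_, ?_⟩
  · have hi' : i ∈ F := hi
    show (if i ∈ F then y i else x i) ∈ u i
    rw [if_pos hi']
    exact (hu i hi').2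
  exact (F.finite_toSet.subset fun i hi => by by_contra hiF; exact hi (if_neg hiF)).countable

/-- From `x ∈ closure B` and a countable `S`, using the Fréchet–Urysohn property of the
subproduct over `S`, extract a sequence in `B` whose restriction to `S` converges. -/
lemma getSeq {I : Type*} {X : I → Type*} [∀ i, TopologicalSpace (X i)]
    (h : ∀ S : Set I, S.Countable → FrechetUrysohnSpace (∀ i : S, X i))
    (x : ∀ i, X i) (S : Set I) (hS : S.Countable) (B : Set (∀ i, X i))
    (hxB : x ∈ closure B) :
    ∃ a : ℕ → ∀ i, X i, (∀ n, a n ∈ B) ∧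
      Tendsto (fun n => S.restrict (a n)) atTop (𝓝 (S.restrict x)) := by
  haveI : FrechetUrysohnSpace (∀ i : S, X i) := h S hS
  have h1 : S.restrict x ∈ closure (S.restrict '' B) :=
    image_closure_subset_closure_image (Pi.continuous_restrict S)
      (Set.mem_image_of_mem _ hxB)
  obtain ⟨v, hv, hconv⟩ := mem_closure_iff_seq_limit.mp h1
  choose a ha hrest using hv
  exact ⟨a, ha, by simpa [hrest] using hconv⟩

theorem stmt3 {I : Type*} {X : I → Type*} [∀ i, TopologicalSpace (X i)]
    (h : ∀ S : Set I, S.Countable → FrechetUrysohnSpace (∀ i : S, X i)) :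
    KappaFrechetUrysohn (∀ i, X i) := by
  classical
  intro U hU x hx
  set σx : Set (∀ i, X i) := {a : ∀ i, X i | {i | a i ≠ x i}.Countable} with hσx
  set A : Set (∀ i, X i) := U ∩ σx with hA
  have hxA : x ∈ closure A := by
    rw [mem_closure_iff]
    intro V hV hxV
    have hVU : ((V ∩ U) ∩ σx).Nonempty := by
      rcases dense_iff_inter_open.mp (sigma_dense x) (V ∩ U) (hV.inter hU)
        (mem_closure_iff.mp hx V hV hxV) with ⟨a, ha⟩
      exact ⟨a, ha⟩
    rcases hVU with ⟨a, ⟨⟨haV, haU⟩, haσ⟩⟩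
    exact ⟨a, haV, haU, haσ⟩
  -- the sequence chooser for each countable set
  have key := fun (S : Set I) (hS : S.Countable) => getSeq h x S hS A hxA
  -- recursive construction of countable sets
  let T : ℕ → {S : Set I // S.Countable} := fun k =>
    Nat.rec ⟨∅, Set.countable_empty⟩
      (fun _ prev =>
        ⟨prev.1 ∪ ⋃ n, {i | (key prev.1 prev.2).choose n i ≠ x i},
          prev.2.union (Set.countable_iUnion fun n =>
            ((key prev.1 prev.2).choose_spec.1 n).2)⟩) k
  have hstep : ∀ k, (T (k + 1)).1
      = (T k).1 ∪ ⋃ n, {i | (key (T k).1 (T k).2).choose n i ≠ x i} := fun k => rfl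
  have hmono : Monotone fun k => (T k).1 :=
    monotone_nat_of_le_succ fun k => by rw [hstep k]; exact Set.subset_union_left
  set S : Set I := ⋃ k, (T k).1 with hS
  have hSc : S.Countable := Set.countable_iUnion fun k => (T k).2
  set AS : Set (∀ i, X i) := {a | a ∈ U ∧ ∀ i ∉ S, a i = x i} with hAS
  have hxAS : x ∈ closure AS := by
    rw [mem_closure_iff]
    intro V hV hxV
    obtain ⟨F, u, hu, hbox⟩ := isOpen_pi_iff.mp hV x hxV
    have hex : ∀ i, i ∈ S → ∃ k, i ∈ (T k).1 := fun i hi => Set.mem_iUnion.mp hi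
    choose g hg using hex
    set k : ℕ := F.sup (fun i => if hi : i ∈ S then g i hi else 0) with hk
    have hFS : ∀ i ∈ F, i ∈ S → i ∈ (T k).1 := by
      intro i hiF hiS
      refine hmono ?_ (hg i hiS)
      calc g i hiS = if hi : i ∈ S then g i hi else 0 := by rw [dif_pos hiS]
        _ ≤ k := Finset.le_sup (f := fun i => if hi : i ∈ S then g i hi else 0) hiF
    obtain ⟨hmem, hconv⟩ := (key (T k).1 (T k).2).choose_spec
    set a := (key (T k).1 (T k).2).choose with ha
    have hsupp : ∀ n, ∀ j, j ∉ S → a n j = x j := by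
      intro n j hj
      by_contra hne
      exact hj (Set.mem_iUnion.mpr ⟨k + 1, by
        rw [hstep k]
        exact Or.inr (Set.mem_iUnion.mpr ⟨n, hne⟩)⟩)
    have hev : ∀ᶠ n in atTop, ∀ i ∈ F, i ∈ S → a n i ∈ u i := by
      rw [Filter.eventually_all_finset F]
      intro i hiF
      by_cases hiS : i ∈ S
      · have hik : i ∈ (T k).1 := hFS i hiF hiS
        have ht : Tendsto (fun n => a n i) atTop (𝓝 (x i)) := by
          have := ((continuous_apply (⟨i, hik⟩ : (T k).1)).tendsto
            ((T k).1.restrict x)).comp hconv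
          exact this
        filter_upwards [ht ((hu i hiF).1.mem_nhds (hu i hiF).2)] with n hn
        exact fun _ => hn
      · exact Eventually.of_forall fun n hn => absurd hn hiS
    obtain ⟨n, hn⟩ := hev.exists
    refine ⟨a n, hbox fun i hi => ?_, (hmem n).1, fun j hj => hsupp n j hj⟩
    by_cases hiS : i ∈ S
    · exact hn i hi hiS
    · rw [hsupp n i hiS]; exact (hu i hi).2
  obtain ⟨b, hb, hbconv⟩ := getSeq h x S hSc AS hxAS
  refine ⟨b, fun n => (hb n).1, ?_⟩
  rw [tendsto_pi_nhds]
  intro i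
  by_cases hi : i ∈ S
  · have := ((continuous_apply (⟨i, hi⟩ : S)).tendsto (S.restrict x)).comp hbconv
    exact this
  · exact tendsto_const_nhds.congr fun n => ((hb n).2 i hi).symm
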